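/- Let F ∈ 𝓕, g ∈ L¹(ℝ²) and f ∈ BMO_F(ℝ²). Then the convolution g ∗ f belongs to BMO_F and ‖g ∗ f‖_{BMO_F} ≤ ‖g‖_{L¹}·‖f‖_{BMO_F}. -/

import Mathlib

open MeasureTheory Metric Real Filter

noncomputable section

/-- The plane `ℝ²`. -/
abbrev Plane := EuclideanSpace ℝ (Fin 2)

/-- Average of `f` over the ball `B(c,r)` (with respect to Lebesgue measure). -/
def ballAvg (f : Plane → ℝ) (c : Plane) (r : ℝ) : ℝ := ⨍ y in ball c r, f y

/-- `K` is a bound for all mean oscillations of `f` (i.e. `‖f‖_BMO ≤ K`). -/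
def OscBound (f : Plane → ℝ) (K : ℝ) : Prop :=
  ∀ c r, 0 < r → (⨍ y in ball c r, |f y - ballAvg f c r|) ≤ K

/-- The `BMO` seminorm of `f`, as a supremum of mean oscillations. -/
def bmoNorm (f : Plane → ℝ) : ℝ :=
  sSup {m | ∃ c r, 0 < r ∧ m = ⨍ y in ball c r, |f y - ballAvg f c r|}

/-- `K` bounds the second (weighted pair of balls) part of the `BMO_F` norm of `f`. -/
def PairBoundF (F : ℝ → ℝ) (f : Plane → ℝ) (K : ℝ) : Prop :=
  ∀ c₁ r₁ c₂ r₂, 0 < r₂ → 0 < r₁ → r₁ ≤ 1 → ball c₂ (2 * r₂) ⊆ ball c₁ r₁ →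
    |ballAvg f c₂ r₂ - ballAvg f c₁ r₁| ≤ K * F ((1 - Real.log r₂) / (1 - Real.log r₁))

/-- The `BMO_F` norm of `f`. -/
def bmoFNorm (F : ℝ → ℝ) (f : Plane → ℝ) : ℝ :=
  bmoNorm f +
    sSup {m | ∃ c₁ r₁ c₂ r₂, 0 < r₂ ∧ 0 < r₁ ∧ r₁ ≤ 1 ∧ ball c₂ (2 * r₂) ⊆ ball c₁ r₁ ∧
      m = |ballAvg f c₂ r₂ - ballAvg f c₁ r₁| / F ((1 - Real.log r₂) / (1 - Real.log r₁))}

/-- Membership in the space `BMO_F`. -/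
def MemBMOF (F : ℝ → ℝ) (f : Plane → ℝ) : Prop :=
  LocallyIntegrable f volume ∧ ∃ K, OscBound f K ∧ PairBoundF F f K

/-- The `LMO_F` norm of `f`. -/
def lmoFNorm (F : ℝ → ℝ) (f : Plane → ℝ) : ℝ :=
  sSup {m | ∃ c r, 0 < r ∧ r ≤ 1 ∧
      m = F (1 - Real.log r) * ⨍ y in ball c r, |f y - ballAvg f c r|} +
  sSup {m | ∃ c₁ r₁ c₂ r₂, 0 < r₂ ∧ 0 < r₁ ∧ r₁ ≤ 1 ∧ ball c₂ (2 * r₂) ⊆ ball c₁ r₁ ∧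
      m = F (1 - Real.log r₁) * |ballAvg f c₂ r₂ - ballAvg f c₁ r₁|}

/-- Membership in the space `LMO_F`. -/
def MemLMOF (F : ℝ → ℝ) (f : Plane → ℝ) : Prop :=
  LocallyIntegrable f volume ∧ ∃ K,
    (∀ c r, 0 < r → r ≤ 1 →
      F (1 - Real.log r) * ⨍ y in ball c r, |f y - ballAvg f c r| ≤ K) ∧
    (∀ c₁ r₁ c₂ r₂, 0 < r₂ → 0 < r₁ → r₁ ≤ 1 → ball c₂ (2 * r₂) ⊆ ball c₁ r₁ →
      F (1 - Real.log r₁) * |ballAvg f c₂ r₂ - ballAvg f c₁ r₁| ≤ K)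

/-- The `L^∞` norm. -/
def supNorm (f : Plane → ℝ) : ℝ := (eLpNorm f ⊤ volume).toReal

/-- The `L^p` norm for a real exponent `p`. -/
def lpNorm (p : ℝ) (f : Plane → ℝ) : ℝ := (eLpNorm f (ENNReal.ofReal p) volume).toReal

/-- The class `𝓕` of admissible weight functions: nondecreasing on `[1,∞)`, `≥ 1` there,
blowing up at infinity, with the exponential-integral decay condition and submultiplicativity. -/
def ClassF (F : ℝ → ℝ) : Prop :=
  (∀ x, 1 ≤ x → 1 ≤ F x) ∧ (∀ x y, 1 ≤ x → x ≤ y → F x ≤ F y) ∧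
  Tendsto F atTop atTop ∧
  ∃ C, 0 < C ∧
    (∀ l x, 1 ≤ l → l ≤ x →
      (∫ y in Set.Ici x, Real.exp (-y / l) * F y) ≤ C * l * Real.exp (-x / l) * F x) ∧
    (∀ x y, 1 ≤ x → 1 ≤ y → F (x * y) ≤ C * F x * F y)

end

/-- Convolution of `g` and `f` on the plane. -/
noncomputable def conv (g f : Plane → ℝ) : Plane → ℝ := fun x => ∫ y, g y * f (x - y)


namespace CB
open scoped ENNReal
noncomputable def V (r : ℝ) : ℝ := (volume (ball (0 : Plane) r)).toReal

lemma vol_ball (c : Plane) (r : ℝ) : volume (ball c r) = volume (ball (0 : Plane) r) :=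
  Measure.addHaar_ball_center volume c r

lemma vol_ball_toReal (c : Plane) (r : ℝ) : (volume (ball c r)).toReal = V r := by
  rw [V, vol_ball]

lemma vol_ball_lt_top (c : Plane) (r : ℝ) : volume (ball c r) < ⊤ := measure_ball_lt_top

lemma V_pos {r : ℝ} (hr : 0 < r) : 0 < V r :=
  ENNReal.toReal_pos (measure_ball_pos _ _ hr).ne' measure_ball_lt_top.ne

lemma V_nonneg (r : ℝ) : 0 ≤ V r := ENNReal.toReal_nonneg

lemma V_mono {r s : ℝ} (h : r ≤ s) : V r ≤ V s :=
  ENNReal.toReal_mono measure_ball_lt_top.ne (measure_mono (ball_subset_ball h))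

variable {f : Plane → ℝ} {K : ℝ}

lemma intOn (hfL : LocallyIntegrable f volume) (c : Plane) (r : ℝ) :
    IntegrableOn f (ball c r) volume :=
  (hfL.integrableOn_isCompact (isCompact_closedBall c r)).mono_set ball_subset_closedBall

lemma avg_eq (f : Plane → ℝ) (c : Plane) (r : ℝ) :
    ballAvg f c r = (V r)⁻¹ * ∫ x in ball c r, f x := by
  rw [ballAvg, setAverage_eq, measureReal_def, vol_ball_toReal, smul_eq_mul]

lemma int_eq (f : Plane → ℝ) (c : Plane) {r : ℝ} (hr : 0 < r) :
    ∫ x in ball c r, f x = V r * ballAvg f c r := by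
  rw [avg_eq, ← mul_assoc, mul_inv_cancel₀ (V_pos hr).ne', one_mul]

lemma osc_nonneg (f : Plane → ℝ) (c : Plane) (r : ℝ) :
    0 ≤ ⨍ y in ball c r, |f y - ballAvg f c r| := by
  rw [setAverage_eq, smul_eq_mul]
  have h1 : 0 ≤ ∫ y in ball c r, |f y - ballAvg f c r| :=
    setIntegral_nonneg measurableSet_ball (fun y _ => abs_nonneg _)
  positivity

lemma K_nonneg (hK : OscBound f K) : 0 ≤ K :=
  le_trans (osc_nonneg f 0 1) (hK 0 1 one_pos)

lemma osc_int (hfL : LocallyIntegrable f volume) {K' : ℝ} (c : Plane) {r : ℝ} (hr : 0 < r)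
    (h : (⨍ y in ball c r, |f y - ballAvg f c r|) ≤ K') :
    ∫ y in ball c r, |f y - ballAvg f c r| ≤ V r * K' := by
  rw [setAverage_eq, measureReal_def, vol_ball_toReal, smul_eq_mul] at h
  have h2 := mul_le_mul_of_nonneg_left h (V_nonneg r)
  rwa [← mul_assoc, mul_inv_cancel₀ (V_pos hr).ne', one_mul] at h2

lemma cmp (hfL : LocallyIntegrable f volume) (hK : OscBound f K) {c₂ c₁ : Plane} {r₂ r₁ : ℝ}
    (hr₂ : 0 < r₂) (hr₁ : 0 < r₁) (hsub : ball c₂ r₂ ⊆ ball c₁ r₁) :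
    |ballAvg f c₂ r₂ - ballAvg f c₁ r₁| ≤ (V r₁ / V r₂) * K := by
  set C := ballAvg f c₁ r₁ with hC
  have hint2 : IntegrableOn (fun x => f x - C) (ball c₂ r₂) volume :=
    (intOn hfL c₂ r₂).sub (integrableOn_const measure_ball_lt_top.ne)
  have hint1 : IntegrableOn (fun x => |f x - C|) (ball c₁ r₁) volume :=
    ((intOn hfL c₁ r₁).sub (integrableOn_const measure_ball_lt_top.ne)).abs
  have h1 : ballAvg f c₂ r₂ - C = (V r₂)⁻¹ * ∫ x in ball c₂ r₂, (f x - C) := by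
    rw [integral_sub (intOn hfL c₂ r₂) (integrableOn_const measure_ball_lt_top.ne),
      setIntegral_const, measureReal_def, avg_eq, vol_ball_toReal, mul_sub, smul_eq_mul, ← mul_assoc,
      inv_mul_cancel₀ (V_pos hr₂).ne', one_mul]
  have h2 : |ballAvg f c₂ r₂ - C| ≤ (V r₂)⁻¹ * ∫ x in ball c₂ r₂, |f x - C| := by
    rw [h1, abs_mul, abs_of_nonneg (inv_nonneg.2 (V_nonneg r₂))]
    refine mul_le_mul_of_nonneg_left ?_ (inv_nonneg.2 (V_nonneg r₂))
    simpa [Real.norm_eq_abs] using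
      norm_integral_le_integral_norm (μ := volume.restrict (ball c₂ r₂)) (fun x => f x - C)
  have h3 : ∫ x in ball c₂ r₂, |f x - C| ≤ ∫ x in ball c₁ r₁, |f x - C| := by
    refine setIntegral_mono_set hint1 ?_ (HasSubset.Subset.eventuallyLE hsub)
    exact Eventually.of_forall fun x => abs_nonneg _
  have h4 : ∫ x in ball c₁ r₁, |f x - C| ≤ V r₁ * K := osc_int hfL c₁ hr₁ (hK c₁ r₁ hr₁)
  calc |ballAvg f c₂ r₂ - C| ≤ (V r₂)⁻¹ * ∫ x in ball c₂ r₂, |f x - C| := h2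
    _ ≤ (V r₂)⁻¹ * (V r₁ * K) := by
        refine mul_le_mul_of_nonneg_left (le_trans h3 h4) (inv_nonneg.2 (V_nonneg r₂))
    _ = (V r₁ / V r₂) * K := by ring

lemma A1cmp (hfL : LocallyIntegrable f volume) (hK : OscBound f K) (z z' : Plane) :
    |ballAvg f z 1 - ballAvg f z' 1| ≤ 2 * (V (‖z - z'‖ + 1) / V 1) * K := by
  set R := ‖z - z'‖ + 1 with hR
  have hR1 : (1:ℝ) ≤ R := by rw [hR]; linarith [norm_nonneg (z - z')]
  have h1 : ball z 1 ⊆ ball z R := ball_subset_ball hR1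
  have h2 : ball z' 1 ⊆ ball z R := by
    intro x hx
    have := mem_ball.1 hx
    rw [mem_ball]
    calc dist x z ≤ dist x z' + dist z' z := dist_triangle x z' z
      _ < 1 + dist z' z := by linarith
      _ = R := by rw [hR, dist_comm, dist_eq_norm, add_comm]
  have e1 := cmp hfL hK one_pos (lt_of_lt_of_le one_pos hR1) h1
  have e2 := cmp hfL hK one_pos (lt_of_lt_of_le one_pos hR1) h2
  calc |ballAvg f z 1 - ballAvg f z' 1|
      ≤ |ballAvg f z 1 - ballAvg f z R| + |ballAvg f z R - ballAvg f z' 1| := abs_sub_le _ _ _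
    _ ≤ V R / V 1 * K + V R / V 1 * K := by
        refine add_le_add e1 ?_
        rw [abs_sub_comm]; exact e2
    _ = 2 * (V R / V 1) * K := by ring

end CB

namespace CB
open scoped ENNReal

variable {f g : Plane → ℝ} {K : ℝ}

lemma preimage_ball (c : Plane) (r : ℝ) (y : Plane) :
    (fun x : Plane => x - y) ⁻¹' (ball (c - y) r) = ball c r := by
  ext x
  simp only [Set.mem_preimage, mem_ball, dist_eq_norm, sub_sub_sub_cancel_right]

lemma sub_right_emb (y : Plane) : MeasurableEmbedding (fun x : Plane => x - y) :=
  (MeasurableEquiv.subRight y).measurableEmbedding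

lemma lint_translate (H : Plane → ℝ≥0∞) (c y : Plane) (r : ℝ) :
    ∫⁻ x in ball c r, H (x - y) = ∫⁻ z in ball (c - y) r, H z := by
  rw [← preimage_ball c r y]
  exact (measurePreserving_sub_right volume y).setLIntegral_comp_preimage_emb
    (sub_right_emb y) H _

lemma int_translate (H : Plane → ℝ) (c y : Plane) (r : ℝ) :
    ∫ x in ball c r, H (x - y) = ∫ z in ball (c - y) r, H z := by
  rw [← preimage_ball c r y]
  exact (measurePreserving_sub_right volume y).setIntegral_preimage_emb
    (sub_right_emb y) H _

lemma A_meas (hfm : AEStronglyMeasurable f volume) :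
    AEMeasurable (fun z : Plane => ballAvg f z 1) volume := by
  have hs : MeasurableSet {q : Plane × Plane | dist q.2 q.1 < 1} :=
    (isOpen_lt (continuous_snd.dist continuous_fst) continuous_const).measurableSet
  have hΦ : AEStronglyMeasurable (fun p : Plane × Plane =>
      Set.indicator {q : Plane × Plane | dist q.2 q.1 < 1} (fun q => f q.2) p)
      ((volume : Measure Plane).prod volume) :=
    AEStronglyMeasurable.indicator (hfm.aemeasurable.comp_snd).aestronglyMeasurable hs
  have h2 := hΦ.integral_prod_right'
  have h3 : (fun z : Plane => ballAvg f z 1)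
      = fun z => (V 1)⁻¹ * ∫ x, Set.indicator {q : Plane × Plane | dist q.2 q.1 < 1}
          (fun q => f q.2) (z, x) := by
    funext z
    have heq : (ball z 1).indicator f = fun x => Set.indicator
        {q : Plane × Plane | dist q.2 q.1 < 1} (fun q => f q.2) (z, x) := by
      funext x
      by_cases h : x ∈ ball z 1
      · rw [Set.indicator_of_mem h, Set.indicator_of_mem (by simpa [mem_ball] using h)]
      · rw [Set.indicator_of_notMem h, Set.indicator_of_notMem (by simpa [mem_ball] using h)]
    rw [avg_eq, ← integral_indicator measurableSet_ball, heq]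
  rw [h3]
  exact ((h2.const_mul ((V 1)⁻¹)).aemeasurable)

noncomputable def NG (g : Plane → ℝ) : ℝ≥0∞ := ∫⁻ y, (‖g y‖₊ : ℝ≥0∞)

noncomputable def Wf (g f : Plane → ℝ) (x : Plane) : ℝ≥0∞ :=
  ∫⁻ y, (‖g y‖₊ : ℝ≥0∞) * (‖ballAvg f (x - y) 1‖₊ : ℝ≥0∞)

noncomputable def Uf (g f : Plane → ℝ) (x : Plane) : ℝ≥0∞ :=
  ∫⁻ y, (‖g y‖₊ : ℝ≥0∞) * (‖f (x - y) - ballAvg f (x - y) 1‖₊ : ℝ≥0∞)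

lemma NG_lt_top (hg : Integrable g volume) : NG g < ⊤ := hg.2

lemma ennnorm_le_add {a b c : ℝ} (h : |a| ≤ |b| + c) :
    (‖a‖₊ : ℝ≥0∞) ≤ (‖b‖₊ : ℝ≥0∞) + ENNReal.ofReal c := by
  show ‖a‖ₑ ≤ ‖b‖ₑ + ENNReal.ofReal c
  rw [Real.enorm_eq_ofReal_abs, Real.enorm_eq_ofReal_abs]
  exact le_trans (ENNReal.ofReal_le_ofReal h) ENNReal.ofReal_add_le

lemma w_cmp (hfL : LocallyIntegrable f volume) (hK : OscBound f K)
    (hgm : AEMeasurable g volume) (x x' : Plane) :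
    Wf g f x ≤ Wf g f x' + ENNReal.ofReal (2 * (V (‖x - x'‖ + 1) / V 1) * K) * NG g := by
  set cc := 2 * (V (‖x - x'‖ + 1) / V 1) * K with hcc
  have hpt : ∀ y, (‖g y‖₊ : ℝ≥0∞) * ‖ballAvg f (x - y) 1‖₊
      ≤ (‖g y‖₊ : ℝ≥0∞) * ‖ballAvg f (x' - y) 1‖₊ + ENNReal.ofReal cc * ‖g y‖₊ := by
    intro y
    have h1 := A1cmp hfL hK (x - y) (x' - y)
    have h2 : x - y - (x' - y) = x - x' := by abel
    rw [h2] at h1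
    have h3 := abs_sub_abs_le_abs_sub (ballAvg f (x - y) 1) (ballAvg f (x' - y) 1)
    have habs : |ballAvg f (x - y) 1| ≤ |ballAvg f (x' - y) 1| + cc := by
      rw [hcc]; linarith
    calc (‖g y‖₊ : ℝ≥0∞) * ‖ballAvg f (x - y) 1‖₊
        ≤ (‖g y‖₊ : ℝ≥0∞) * ((‖ballAvg f (x' - y) 1‖₊ : ℝ≥0∞) + ENNReal.ofReal cc) :=
          mul_le_mul_right (ennnorm_le_add habs) _
      _ = (‖g y‖₊ : ℝ≥0∞) * ‖ballAvg f (x' - y) 1‖₊ + ENNReal.ofReal cc * ‖g y‖₊ := by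
          rw [mul_add, mul_comm _ (ENNReal.ofReal cc)]
  have hmeas : AEMeasurable (fun y => (‖g y‖₊ : ℝ≥0∞) * ‖ballAvg f (x' - y) 1‖₊) volume := by
    refine AEMeasurable.mul hgm.enorm ?_
    exact (((A_meas hfL.aestronglyMeasurable).comp_quasiMeasurePreserving
      ((Measure.measurePreserving_sub_left volume x').quasiMeasurePreserving)).aestronglyMeasurable).enorm
  calc Wf g f x ≤ ∫⁻ y, ((‖g y‖₊ : ℝ≥0∞) * ‖ballAvg f (x' - y) 1‖₊ + ENNReal.ofReal cc * ‖g y‖₊) :=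
        lintegral_mono hpt
    _ = Wf g f x' + ∫⁻ y, ENNReal.ofReal cc * ‖g y‖₊ := lintegral_add_left' hmeas _
    _ = Wf g f x' + ENNReal.ofReal cc * NG g := by
        rw [lintegral_const_mul' _ _ ENNReal.ofReal_ne_top]; rfl

end CB

namespace CB
open scoped ENNReal

variable {f g : Plane → ℝ} {K : ℝ}

noncomputable def MM (K r : ℝ) : ℝ≥0∞ :=
  ENNReal.ofReal (V (r + 1) * K) +
    volume (ball (0 : Plane) r) * ENNReal.ofReal ((V (r + 1) / V 1) * K)

lemma MM_ne_top (K r : ℝ) : MM K r ≠ ⊤ := by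
  exact ENNReal.add_ne_top.2 ⟨ENNReal.ofReal_ne_top,
    ENNReal.mul_ne_top measure_ball_lt_top.ne ENNReal.ofReal_ne_top⟩

lemma oscL (hfL : LocallyIntegrable f volume) (hK : OscBound f K) {r : ℝ} (hr : 0 < r)
    (z₀ : Plane) :
    ∫⁻ z in ball z₀ r, (‖f z - ballAvg f z 1‖₊ : ℝ≥0∞) ≤ MM K r := by
  set C := ballAvg f z₀ (r + 1) with hC
  have hr1 : (0:ℝ) < r + 1 := by linarith
  have hpt : ∀ z ∈ ball z₀ r, (‖f z - ballAvg f z 1‖₊ : ℝ≥0∞)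
      ≤ (‖f z - C‖₊ : ℝ≥0∞) + ENNReal.ofReal ((V (r + 1) / V 1) * K) := by
    intro z hz
    have hsub : ball z 1 ⊆ ball z₀ (r + 1) := by
      intro x hx
      rw [mem_ball] at hx hz ⊢
      calc dist x z₀ ≤ dist x z + dist z z₀ := dist_triangle _ _ _
        _ < 1 + r := by linarith
        _ = r + 1 := by ring
    have hcmp := cmp hfL hK one_pos hr1 hsub
    refine ennnorm_le_add ?_
    have h1 : f z - ballAvg f z 1 = (f z - C) + (C - ballAvg f z 1) := by ring
    rw [h1]
    refine le_trans (abs_add_le _ _) ?_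
    rw [abs_sub_comm C (ballAvg f z 1)]
    exact add_le_add_right hcmp _
  calc ∫⁻ z in ball z₀ r, (‖f z - ballAvg f z 1‖₊ : ℝ≥0∞)
      ≤ ∫⁻ z in ball z₀ r, ((‖f z - C‖₊ : ℝ≥0∞) + ENNReal.ofReal ((V (r + 1) / V 1) * K)) :=
        lintegral_mono_ae ((ae_restrict_iff' measurableSet_ball).2 (Eventually.of_forall hpt))
    _ = (∫⁻ z in ball z₀ r, (‖f z - C‖₊ : ℝ≥0∞)) +
          ENNReal.ofReal ((V (r + 1) / V 1) * K) * volume (ball z₀ r) := by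
        rw [lintegral_add_right' _ aemeasurable_const, setLIntegral_const]
    _ ≤ ENNReal.ofReal (V (r + 1) * K) +
          volume (ball (0:Plane) r) * ENNReal.ofReal ((V (r + 1) / V 1) * K) := by
        refine add_le_add ?_ ?_
        · have hmono : (∫⁻ z in ball z₀ r, (‖f z - C‖₊ : ℝ≥0∞))
              ≤ ∫⁻ z in ball z₀ (r + 1), (‖f z - C‖₊ : ℝ≥0∞) :=
            lintegral_mono' (Measure.restrict_mono (ball_subset_ball (by linarith)) le_rfl) le_rfl
          refine le_trans hmono ?_
          have hint : IntegrableOn (fun z => f z - C) (ball z₀ (r + 1)) volume :=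
            (intOn hfL z₀ (r + 1)).sub (integrableOn_const measure_ball_lt_top.ne)
          show ∫⁻ z in ball z₀ (r + 1), ‖f z - C‖ₑ ≤ _
          rw [← ofReal_integral_norm_eq_lintegral_enorm hint]
          refine ENNReal.ofReal_le_ofReal ?_
          have := osc_int hfL z₀ hr1 (hK z₀ (r + 1) hr1)
          simpa only [Real.norm_eq_abs, hC] using this
        · rw [vol_ball z₀ r, mul_comm]

lemma qmp_sub (c : Plane) (r : ℝ) :
    Measure.QuasiMeasurePreserving (fun p : Plane × Plane => p.1 - p.2)
      ((volume.restrict (ball c r)).prod volume) volume := by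
  have h := quasiMeasurePreserving_sub (volume : Measure Plane) (ν := volume)
  exact h.mono (Measure.AbsolutelyContinuous.prod
    (Measure.absolutelyContinuous_of_le Measure.restrict_le_self) .rfl) .rfl

lemma uB (hfL : LocallyIntegrable f volume) (hK : OscBound f K)
    (hgm : AEMeasurable g volume) (c : Plane) {r : ℝ} (hr : 0 < r) :
    ∫⁻ x in ball c r, Uf g f x ≤ MM K r * NG g := by
  have hfm := hfL.aestronglyMeasurable
  have hmeas : AEMeasurable (Function.uncurry fun (x y : Plane) =>
      (‖g y‖₊ : ℝ≥0∞) * (‖f (x - y) - ballAvg f (x - y) 1‖₊ : ℝ≥0∞))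
      ((volume.restrict (ball c r)).prod volume) := by
    refine AEMeasurable.mul (hgm.comp_snd.enorm) ?_
    exact (((hfm.aemeasurable.sub (A_meas hfm)).comp_quasiMeasurePreserving
      (qmp_sub c r)).aestronglyMeasurable).enorm
  calc ∫⁻ x in ball c r, Uf g f x
      = ∫⁻ y, ∫⁻ x in ball c r,
          (‖g y‖₊ : ℝ≥0∞) * (‖f (x - y) - ballAvg f (x - y) 1‖₊ : ℝ≥0∞) := by
        exact lintegral_lintegral_swap hmeas
    _ ≤ ∫⁻ y, (‖g y‖₊ : ℝ≥0∞) * MM K r := by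
        refine lintegral_mono fun y => ?_
        rw [lintegral_const_mul' _ _ ENNReal.coe_ne_top]
        refine mul_le_mul_right ?_ _
        have ht := lint_translate (fun z => (‖f z - ballAvg f z 1‖₊ : ℝ≥0∞)) c y r
        rw [ht]
        exact oscL hfL hK hr (c - y)
    _ = MM K r * NG g := by
        rw [lintegral_mul_const' _ _ (MM_ne_top K r), mul_comm]; rfl

lemma WB (hfL : LocallyIntegrable f volume) (hK : OscBound f K)
    (hgm : AEMeasurable g volume) (c : Plane) {r : ℝ} (hr : 0 < r) (hK0 : 0 ≤ K) :
    ∫⁻ x in ball c r, Wf g f x ≤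
      (Wf g f 0 + ENNReal.ofReal (2 * (V (‖c‖ + r + 1) / V 1) * K) * NG g) *
        volume (ball (0 : Plane) r) := by
  have hpt : ∀ x ∈ ball c r, Wf g f x ≤
      Wf g f 0 + ENNReal.ofReal (2 * (V (‖c‖ + r + 1) / V 1) * K) * NG g := by
    intro x hx
    refine le_trans (w_cmp hfL hK hgm x 0) ?_
    refine add_le_add_right (mul_le_mul_left (ENNReal.ofReal_le_ofReal ?_) _) _
    have h1 : ‖x - 0‖ + 1 ≤ ‖c‖ + r + 1 := by
      rw [sub_zero]
      have : ‖x‖ ≤ ‖c‖ + dist x c := by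
        rw [dist_eq_norm]
        calc ‖x‖ = ‖c + (x - c)‖ := by congr 1; abel
          _ ≤ ‖c‖ + ‖x - c‖ := norm_add_le _ _
      have hd : dist x c < r := mem_ball.1 hx
      linarith
    have h2 : V (‖x - 0‖ + 1) ≤ V (‖c‖ + r + 1) := V_mono h1
    have h3 : 0 < V 1 := V_pos one_pos
    have h4 : V (‖x - 0‖ + 1) / V 1 ≤ V (‖c‖ + r + 1) / V 1 := by gcongr
    nlinarith
  calc ∫⁻ x in ball c r, Wf g f x
      ≤ ∫⁻ _x in ball c r, (Wf g f 0 +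
          ENNReal.ofReal (2 * (V (‖c‖ + r + 1) / V 1) * K) * NG g) :=
        lintegral_mono_ae ((ae_restrict_iff' measurableSet_ball).2 (Eventually.of_forall hpt))
    _ = _ := by rw [setLIntegral_const, vol_ball]

lemma prod_int (hfL : LocallyIntegrable f volume) (hK : OscBound f K)
    (hg : Integrable g volume) (hw : Wf g f 0 < ⊤) (c : Plane) {r : ℝ} (hr : 0 < r)
    (hK0 : 0 ≤ K) :
    Integrable (fun p : Plane × Plane => g p.2 * f (p.1 - p.2))
      ((volume.restrict (ball c r)).prod volume) := by
  have hgm := hg.aemeasurable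
  have hfm := hfL.aestronglyMeasurable
  have hsm : AEStronglyMeasurable (fun p : Plane × Plane => g p.2 * f (p.1 - p.2))
      ((volume.restrict (ball c r)).prod volume) :=
    ((hgm.comp_snd).mul (hfm.aemeasurable.comp_quasiMeasurePreserving (qmp_sub c r))).aestronglyMeasurable
  refine ⟨hsm, ?_⟩
  rw [HasFiniteIntegral]
  have hb : ∀ p : Plane × Plane, (‖g p.2 * f (p.1 - p.2)‖₊ : ℝ≥0∞) ≤
      (‖g p.2‖₊ : ℝ≥0∞) * (‖f (p.1 - p.2) - ballAvg f (p.1 - p.2) 1‖₊ : ℝ≥0∞) +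
      (‖g p.2‖₊ : ℝ≥0∞) * (‖ballAvg f (p.1 - p.2) 1‖₊ : ℝ≥0∞) := by
    intro p
    rw [nnnorm_mul, ENNReal.coe_mul, ← mul_add]
    refine mul_le_mul_right ?_ _
    have habs : |f (p.1 - p.2)| ≤ |f (p.1 - p.2) - ballAvg f (p.1 - p.2) 1| +
        |ballAvg f (p.1 - p.2) 1| := by
      calc |f (p.1 - p.2)|
          = |(f (p.1 - p.2) - ballAvg f (p.1 - p.2) 1) + ballAvg f (p.1 - p.2) 1| := by
            congr 1; ring
        _ ≤ _ := abs_add_le _ _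
    refine le_trans (ennnorm_le_add (b := f (p.1 - p.2) - ballAvg f (p.1 - p.2) 1)
      (c := |ballAvg f (p.1 - p.2) 1|) habs) ?_
    rw [← Real.enorm_eq_ofReal_abs (ballAvg f (p.1 - p.2) 1)]
    exact le_rfl
  have hm1 : AEMeasurable (fun p : Plane × Plane =>
      (‖g p.2‖₊ : ℝ≥0∞) * (‖f (p.1 - p.2) - ballAvg f (p.1 - p.2) 1‖₊ : ℝ≥0∞))
      ((volume.restrict (ball c r)).prod volume) := by
    refine AEMeasurable.mul (hgm.comp_snd.enorm) ?_
    exact (((hfm.aemeasurable.sub (A_meas hfm)).comp_quasiMeasurePreserving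
      (qmp_sub c r)).aestronglyMeasurable).enorm
  have hm2 : AEMeasurable (fun p : Plane × Plane =>
      (‖g p.2‖₊ : ℝ≥0∞) * (‖ballAvg f (p.1 - p.2) 1‖₊ : ℝ≥0∞))
      ((volume.restrict (ball c r)).prod volume) := by
    refine AEMeasurable.mul (hgm.comp_snd.enorm) ?_
    exact (((A_meas hfm).comp_quasiMeasurePreserving
      (qmp_sub c r)).aestronglyMeasurable).enorm
  calc ∫⁻ p, (‖g p.2 * f (p.1 - p.2)‖₊ : ℝ≥0∞) ∂((volume.restrict (ball c r)).prod volume)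
      ≤ ∫⁻ p, ((‖g p.2‖₊ : ℝ≥0∞) * (‖f (p.1 - p.2) - ballAvg f (p.1 - p.2) 1‖₊ : ℝ≥0∞) +
          (‖g p.2‖₊ : ℝ≥0∞) * (‖ballAvg f (p.1 - p.2) 1‖₊ : ℝ≥0∞))
          ∂((volume.restrict (ball c r)).prod volume) := lintegral_mono hb
    _ = (∫⁻ p, (‖g p.2‖₊ : ℝ≥0∞) * (‖f (p.1 - p.2) - ballAvg f (p.1 - p.2) 1‖₊ : ℝ≥0∞)
          ∂((volume.restrict (ball c r)).prod volume)) +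
        ∫⁻ p, (‖g p.2‖₊ : ℝ≥0∞) * (‖ballAvg f (p.1 - p.2) 1‖₊ : ℝ≥0∞)
          ∂((volume.restrict (ball c r)).prod volume) := lintegral_add_left' hm1 _
    _ = (∫⁻ x in ball c r, Uf g f x) + ∫⁻ x in ball c r, Wf g f x := by
        rw [lintegral_prod _ hm1, lintegral_prod _ hm2]; rfl
    _ < ⊤ := by
        have h1 := uB hfL hK hgm c hr
        have h2 := WB hfL hK hgm c hr hK0
        have hfin1 : MM K r * NG g < ⊤ :=
          ENNReal.mul_lt_top (lt_top_iff_ne_top.2 (MM_ne_top K r)) (NG_lt_top hg)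
        have hfin2 : (Wf g f 0 + ENNReal.ofReal (2 * (V (‖c‖ + r + 1) / V 1) * K) * NG g) *
            volume (ball (0 : Plane) r) < ⊤ := by
          refine ENNReal.mul_lt_top ?_ measure_ball_lt_top
          exact ENNReal.add_lt_top.2 ⟨hw,
            ENNReal.mul_lt_top ENNReal.ofReal_lt_top (NG_lt_top hg)⟩
        exact lt_of_le_of_lt (add_le_add h1 h2) (ENNReal.add_lt_top.2 ⟨hfin1, hfin2⟩)

end CB

namespace CB
open scoped ENNReal

variable {f g : Plane → ℝ} {K : ℝ}

lemma int_snd {φ : Plane → ℝ} (hφ : Integrable φ volume) (c : Plane) (r : ℝ) :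
    Integrable (fun p : Plane × Plane => φ p.2) ((volume.restrict (ball c r)).prod volume) := by
  haveI : IsFiniteMeasure (volume.restrict (ball c r)) :=
    ⟨by rw [Measure.restrict_apply_univ]; exact measure_ball_lt_top⟩
  have hsm : AEStronglyMeasurable (fun p : Plane × Plane => φ p.2)
      ((volume.restrict (ball c r)).prod volume) := (hφ.aemeasurable.comp_snd).aestronglyMeasurable
  refine (integrable_prod_iff hsm).2 ⟨Eventually.of_forall fun _x : Plane => hφ, ?_⟩
  exact integrable_const (∫ y, ‖φ y‖ ∂volume)

lemma avg_conv (hfL : LocallyIntegrable f volume) (hK : OscBound f K)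
    (hg : Integrable g volume) (hw : Wf g f 0 < ⊤) (hK0 : 0 ≤ K)
    (c : Plane) {r : ℝ} (hr : 0 < r) :
    ballAvg (conv g f) c r = ∫ y, g y * ballAvg f (c - y) r ∧
      Integrable (fun y => g y * ballAvg f (c - y) r) volume := by
  have hprod := prod_int hfL hK hg hw c hr hK0
  have hswap := integral_integral_swap
    (f := fun (x y : Plane) => g y * f (x - y)) hprod
  have hinner : ∀ y : Plane, (∫ x in ball c r, g y * f (x - y)) =
      g y * (V r * ballAvg f (c - y) r) := by
    intro y
    rw [integral_const_mul, int_translate f c y r, int_eq f (c - y) hr]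
  have hIy : Integrable (fun y => ∫ x in ball c r, g y * f (x - y)) volume :=
    hprod.integral_prod_right
  have hIA : Integrable (fun y => g y * ballAvg f (c - y) r) volume := by
    have h1 : Integrable (fun y => g y * (V r * ballAvg f (c - y) r)) volume :=
      hIy.congr (Eventually.of_forall hinner)
    have h2 := h1.const_mul ((V r)⁻¹)
    refine h2.congr (Eventually.of_forall fun y => ?_)
    show (V r)⁻¹ * (g y * (V r * ballAvg f (c - y) r)) = g y * ballAvg f (c - y) r
    rw [show (V r)⁻¹ * (g y * (V r * ballAvg f (c - y) r)) =
      ((V r)⁻¹ * V r) * (g y * ballAvg f (c - y) r) by ring,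
      inv_mul_cancel₀ (V_pos hr).ne', one_mul]
  constructor
  · have hc : conv g f = fun x => ∫ y, g y * f (x - y) := rfl
    rw [avg_eq, hc, hswap]
    have hre : (fun y => ∫ x in ball c r, g y * f (x - y)) =
        fun y => V r * (g y * ballAvg f (c - y) r) := by
      funext y; rw [hinner y]; ring
    rw [hre, integral_const_mul, ← mul_assoc, inv_mul_cancel₀ (V_pos hr).ne', one_mul]
  · exact hIA

lemma osc_conv (hfL : LocallyIntegrable f volume) (hK : OscBound f K)
    (hg : Integrable g volume) (hw : Wf g f 0 < ⊤) (hK0 : 0 ≤ K)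
    (c : Plane) {r : ℝ} (hr : 0 < r) {N' : ℝ}
    (hN' : ∀ z : Plane, (⨍ y in ball z r, |f y - ballAvg f z r|) ≤ N') :
    (⨍ x in ball c r, |conv g f x - ballAvg (conv g f) c r|) ≤ (∫ y, |g y|) * N' := by
  have hprod := prod_int hfL hK hg hw c hr hK0
  obtain ⟨havg, hIA⟩ := avg_conv hfL hK hg hw hK0 c hr
  have hprod2 : Integrable (fun p : Plane × Plane =>
      g p.2 * f (p.1 - p.2) - g p.2 * ballAvg f (c - p.2) r)
      ((volume.restrict (ball c r)).prod volume) :=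
    hprod.sub (int_snd hIA c r)
  have hconvInt : IntegrableOn (conv g f) (ball c r) volume := hprod.integral_prod_left
  have hInt1 : IntegrableOn (fun x => |conv g f x - ballAvg (conv g f) c r|)
      (ball c r) volume :=
    (hconvInt.sub (integrableOn_const measure_ball_lt_top.ne)).abs
  have hΨ : Integrable (fun x => ∫ y, ‖g y * f (x - y) - g y * ballAvg f (c - y) r‖)
      (volume.restrict (ball c r)) := hprod2.integral_norm_prod_left
  have hae : ∀ᵐ x ∂(volume.restrict (ball c r)),
      |conv g f x - ballAvg (conv g f) c r|
        ≤ ∫ y, ‖g y * f (x - y) - g y * ballAvg f (c - y) r‖ := by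
    filter_upwards [hprod.prod_right_ae] with x hx
    rw [havg]
    have h1 : conv g f x = ∫ y, g y * f (x - y) := rfl
    rw [h1, ← integral_sub hx hIA]
    simpa [Real.norm_eq_abs] using norm_integral_le_integral_norm
      (fun y => g y * f (x - y) - g y * ballAvg f (c - y) r) (μ := volume)
  have step1 : ∫ x in ball c r, |conv g f x - ballAvg (conv g f) c r|
      ≤ ∫ x in ball c r, ∫ y, ‖g y * f (x - y) - g y * ballAvg f (c - y) r‖ :=
    integral_mono_ae hInt1 hΨ hae
  have hswap2 : (∫ x in ball c r, ∫ y, ‖g y * f (x - y) - g y * ballAvg f (c - y) r‖)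
      = ∫ y, ∫ x in ball c r, ‖g y * f (x - y) - g y * ballAvg f (c - y) r‖ :=
    integral_integral_swap hprod2.norm
  have hinner2 : ∀ y : Plane,
      (∫ x in ball c r, ‖g y * f (x - y) - g y * ballAvg f (c - y) r‖)
        ≤ |g y| * (V r * N') := by
    intro y
    have he : (fun x => ‖g y * f (x - y) - g y * ballAvg f (c - y) r‖)
        = fun x => |g y| * |f (x - y) - ballAvg f (c - y) r| := by
      funext x
      rw [Real.norm_eq_abs, ← mul_sub, abs_mul]
    rw [he, integral_const_mul,
      int_translate (fun z => |f z - ballAvg f (c - y) r|) c y r]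
    exact mul_le_mul_of_nonneg_left
      (osc_int hfL (c - y) hr (hN' (c - y))) (abs_nonneg _)
  have step2 : (∫ y, ∫ x in ball c r, ‖g y * f (x - y) - g y * ballAvg f (c - y) r‖)
      ≤ ∫ y, |g y| * (V r * N') := by
    refine integral_mono_ae hprod2.integral_norm_prod_right (hg.abs.mul_const _)
      (Eventually.of_forall hinner2)
  have step3 : (∫ y, |g y| * (V r * N')) = (∫ y, |g y|) * (V r * N') :=
    integral_mul_const _ _
  have hA2 : (⨍ x in ball c r, |conv g f x - ballAvg (conv g f) c r|)
      = (V r)⁻¹ * ∫ x in ball c r, |conv g f x - ballAvg (conv g f) c r| := by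
    rw [setAverage_eq, measureReal_def, vol_ball_toReal, smul_eq_mul]
  rw [hA2]
  calc (V r)⁻¹ * ∫ x in ball c r, |conv g f x - ballAvg (conv g f) c r|
      ≤ (V r)⁻¹ * ((∫ y, |g y|) * (V r * N')) := by
        refine mul_le_mul_of_nonneg_left ?_ (inv_nonneg.2 (V_nonneg r))
        rw [← step3]
        exact le_trans step1 (le_of_eq hswap2 |>.trans step2)
    _ = (∫ y, |g y|) * N' := by
        rw [show (V r)⁻¹ * ((∫ y, |g y|) * (V r * N')) =
          ((V r)⁻¹ * V r) * ((∫ y, |g y|) * N') by ring,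
          inv_mul_cancel₀ (V_pos hr).ne', one_mul]

lemma pair_conv (hfL : LocallyIntegrable f volume) (hK : OscBound f K)
    (hg : Integrable g volume) (hw : Wf g f 0 < ⊤) (hK0 : 0 ≤ K)
    {c₁ c₂ : Plane} {r₁ r₂ : ℝ} (hr₂ : 0 < r₂) (hr₁ : 0 < r₁) {N' Farg : ℝ}
    (hΔ : ∀ y : Plane, |ballAvg f (c₂ - y) r₂ - ballAvg f (c₁ - y) r₁| ≤ N' * Farg) :
    |ballAvg (conv g f) c₂ r₂ - ballAvg (conv g f) c₁ r₁|
      ≤ (∫ y, |g y|) * (N' * Farg) := by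
  obtain ⟨h2, hIA2⟩ := avg_conv hfL hK hg hw hK0 c₂ hr₂
  obtain ⟨h1, hIA1⟩ := avg_conv hfL hK hg hw hK0 c₁ hr₁
  rw [h2, h1, ← integral_sub hIA2 hIA1]
  have hn := norm_integral_le_integral_norm
    (fun y => g y * ballAvg f (c₂ - y) r₂ - g y * ballAvg f (c₁ - y) r₁) (μ := volume)
  rw [Real.norm_eq_abs] at hn
  refine le_trans hn ?_
  have hstep : (∫ y, ‖g y * ballAvg f (c₂ - y) r₂ - g y * ballAvg f (c₁ - y) r₁‖)
      ≤ ∫ y, |g y| * (N' * Farg) := by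
    refine integral_mono_ae (hIA2.sub hIA1).norm (hg.abs.mul_const _)
      (Eventually.of_forall fun y => ?_)
    simp only [Real.norm_eq_abs, ← mul_sub, abs_mul]
    exact mul_le_mul_of_nonneg_left (hΔ y) (abs_nonneg _)
  refine le_trans hstep ?_
  rw [integral_mul_const]

end CB

namespace CB
open scoped ENNReal

variable {f g : Plane → ℝ} {K : ℝ}

lemma ufin (hfL : LocallyIntegrable f volume) (hK : OscBound f K)
    (hg : Integrable g volume) : ∀ᵐ x ∂(volume : Measure Plane), Uf g f x < ⊤ := by
  have hgm := hg.aemeasurable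
  have hfm := hfL.aestronglyMeasurable
  have hAm := A_meas hfm
  set g' := hgm.mk g with hg'def
  have hg'm : Measurable g' := hgm.measurable_mk
  have hgg' : g =ᵐ[volume] g' := hgm.ae_eq_mk
  set f' := hfm.aemeasurable.mk f with hf'def
  have hf'm : Measurable f' := hfm.aemeasurable.measurable_mk
  have hff' : f =ᵐ[volume] f' := hfm.aemeasurable.ae_eq_mk
  set A' := hAm.mk _ with hA'def
  have hA'm : Measurable A' := hAm.measurable_mk
  have hAA' : (fun z : Plane => ballAvg f z 1) =ᵐ[volume] A' := hAm.ae_eq_mk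
  set U' : Plane → ℝ≥0∞ :=
    fun x => ∫⁻ y, (‖g' y‖₊ : ℝ≥0∞) * (‖f' (x - y) - A' (x - y)‖₊ : ℝ≥0∞) with hU'def
  have hU'meas : Measurable U' := by
    apply Measurable.lintegral_prod_right'
      (f := fun p : Plane × Plane => (‖g' p.2‖₊ : ℝ≥0∞) * ‖f' (p.1 - p.2) - A' (p.1 - p.2)‖₊)
    exact ((hg'm.comp measurable_snd).enorm).mul
      (((hf'm.comp (measurable_fst.sub measurable_snd)).sub
        (hA'm.comp (measurable_fst.sub measurable_snd))).enorm)
  have hUU' : ∀ x, Uf g f x = U' x := by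
    intro x
    refine lintegral_congr_ae ?_
    have hq := (Measure.measurePreserving_sub_left volume x).quasiMeasurePreserving
    have h1 : (fun y : Plane => f (x - y)) =ᵐ[volume] fun y => f' (x - y) :=
      hq.ae_eq_comp hff'
    have h2 : (fun y : Plane => ballAvg f (x - y) 1) =ᵐ[volume] fun y => A' (x - y) :=
      hq.ae_eq_comp hAA'
    filter_upwards [hgg', h1, h2] with y e1 e2 e3
    rw [e1, e2, e3]
  have hball : ∀ n : ℕ, ∀ᵐ x ∂(volume.restrict (ball (0 : Plane) (n + 1 : ℝ))), U' x < ⊤ := by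
    intro n
    refine ae_lt_top hU'meas ?_
    have hle : (∫⁻ x in ball (0 : Plane) (n + 1 : ℝ), U' x)
        = ∫⁻ x in ball (0 : Plane) (n + 1 : ℝ), Uf g f x :=
      lintegral_congr fun x => (hUU' x).symm
    rw [hle]
    exact ((uB hfL hK hgm 0 (by positivity)).trans_lt
      (ENNReal.mul_lt_top (MM_ne_top K _).lt_top (NG_lt_top hg))).ne
  have hall : ∀ᵐ x ∂(volume : Measure Plane),
      ∀ n : ℕ, x ∈ ball (0 : Plane) (n + 1 : ℝ) → U' x < ⊤ :=
    ae_all_iff.2 fun n => (ae_restrict_iff' measurableSet_ball).1 (hball n)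
  filter_upwards [hall] with x hx
  obtain ⟨n, hn⟩ := exists_nat_gt ‖x‖
  rw [hUU' x]
  refine hx n ?_
  rw [mem_ball, dist_eq_norm, sub_zero]
  linarith

lemma conv_zero (hfL : LocallyIntegrable f volume) (hK : OscBound f K)
    (hg : Integrable g volume) (hw : ¬ Wf g f 0 < ⊤) :
    conv g f =ᵐ[volume] 0 := by
  have hgm := hg.aemeasurable
  have hfm := hfL.aestronglyMeasurable
  have hW0 : Wf g f 0 = ⊤ := by
    simpa [not_lt, top_le_iff] using hw
  filter_upwards [ufin hfL hK hg] with x hu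
  show conv g f x = 0
  refine integral_undef fun hint => ?_
  have hT : (∫⁻ y, (‖g y‖₊ : ℝ≥0∞) * (‖f (x - y)‖₊ : ℝ≥0∞)) < ⊤ := by
    have h2 := hint.2
    rw [HasFiniteIntegral] at h2
    refine lt_of_eq_of_lt ?_ h2
    refine lintegral_congr fun y => ?_
    change _ = ((‖g y * f (x - y)‖₊ : NNReal) : ℝ≥0∞)
    rw [nnnorm_mul, ENNReal.coe_mul]
  have hWx : Wf g f x < ⊤ := by
    have hpt : ∀ y, (‖g y‖₊ : ℝ≥0∞) * (‖ballAvg f (x - y) 1‖₊ : ℝ≥0∞) ≤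
        (‖g y‖₊ : ℝ≥0∞) * (‖f (x - y)‖₊ : ℝ≥0∞) +
          (‖g y‖₊ : ℝ≥0∞) * (‖f (x - y) - ballAvg f (x - y) 1‖₊ : ℝ≥0∞) := by
      intro y
      rw [← mul_add]
      refine mul_le_mul_right ?_ _
      have habs : |ballAvg f (x - y) 1| ≤ |f (x - y)| + |f (x - y) - ballAvg f (x - y) 1| := by
        calc |ballAvg f (x - y) 1|
            = |f (x - y) - (f (x - y) - ballAvg f (x - y) 1)| := by congr 1; ring
          _ ≤ _ := abs_sub _ _
      refine le_trans (ennnorm_le_add (b := f (x - y))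
        (c := |f (x - y) - ballAvg f (x - y) 1|) habs) ?_
      rw [← Real.enorm_eq_ofReal_abs (f (x - y) - ballAvg f (x - y) 1)]
      exact le_rfl
    have hmeas1 : AEMeasurable (fun y => (‖g y‖₊ : ℝ≥0∞) * (‖f (x - y)‖₊ : ℝ≥0∞)) volume := by
      refine hgm.enorm.mul ?_
      exact ((hfm.aemeasurable.comp_quasiMeasurePreserving
        (Measure.measurePreserving_sub_left volume x).quasiMeasurePreserving).aestronglyMeasurable).enorm
    calc Wf g f x ≤ ∫⁻ y, ((‖g y‖₊ : ℝ≥0∞) * (‖f (x - y)‖₊ : ℝ≥0∞) +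
          (‖g y‖₊ : ℝ≥0∞) * (‖f (x - y) - ballAvg f (x - y) 1‖₊ : ℝ≥0∞)) :=
        lintegral_mono hpt
      _ = (∫⁻ y, (‖g y‖₊ : ℝ≥0∞) * (‖f (x - y)‖₊ : ℝ≥0∞)) + Uf g f x :=
        lintegral_add_left' hmeas1 _
      _ < ⊤ := ENNReal.add_lt_top.2 ⟨hT, hu⟩
  have hcmp := w_cmp hfL hK hgm 0 x
  rw [hW0] at hcmp
  have hfin : Wf g f x + ENNReal.ofReal (2 * (V (‖(0:Plane) - x‖ + 1) / V 1) * K) * NG g < ⊤ :=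
    ENNReal.add_lt_top.2 ⟨hWx, ENNReal.mul_lt_top ENNReal.ofReal_lt_top (NG_lt_top hg)⟩
  exact absurd (lt_of_le_of_lt hcmp hfin) (lt_irrefl _)

lemma avg_zero (hzero : conv g f =ᵐ[volume] 0) (c : Plane) (r : ℝ) :
    ballAvg (conv g f) c r = 0 := by
  rw [avg_eq]
  have h0 : (∫ x in ball c r, conv g f x) = ∫ x in ball c r, (0:ℝ) :=
    setIntegral_congr_ae measurableSet_ball (hzero.mono fun x hx _ => hx)
  rw [h0, integral_zero, mul_zero]

lemma osc_zero (hzero : conv g f =ᵐ[volume] 0) (c : Plane) (r : ℝ) :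
    (⨍ x in ball c r, |conv g f x - ballAvg (conv g f) c r|) = 0 := by
  have h1 : (⨍ x in ball c r, |conv g f x - ballAvg (conv g f) c r|)
      = (V r)⁻¹ * ∫ x in ball c r, |conv g f x - ballAvg (conv g f) c r| := by
    rw [setAverage_eq, measureReal_def, vol_ball_toReal, smul_eq_mul]
  rw [h1, avg_zero hzero c r]
  have h0 : (∫ x in ball c r, |conv g f x - 0|) = ∫ x in ball c r, (0:ℝ) :=
    setIntegral_congr_ae measurableSet_ball (hzero.mono fun x hx _ => by rw [hx, Pi.zero_apply, sub_zero, abs_zero])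
  rw [h0, integral_zero, mul_zero]

lemma locInt_zero (hzero : conv g f =ᵐ[volume] 0) :
    LocallyIntegrable (conv g f) volume := by
  intro x
  exact ⟨ball x 1, ball_mem_nhds x one_pos,
    (integrable_zero _ _ _).congr (ae_restrict_of_ae hzero.symm)⟩

end CB

namespace CB
open scoped ENNReal

variable {f g : Plane → ℝ} {K : ℝ}

lemma two_r_le {c₁ c₂ : Plane} {r₁ r₂ : ℝ} (hr₂ : 0 < r₂)
    (hsub : ball c₂ (2 * r₂) ⊆ ball c₁ r₁) : 2 * r₂ ≤ r₁ := by
  by_contra hcon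
  push_neg at hcon
  have hr₁pos : 0 < r₁ := by
    have h := hsub (mem_ball_self (by positivity))
    exact lt_of_le_of_lt dist_nonneg (mem_ball.1 h)
  set t := (r₁ + 2 * r₂) / 2 with ht
  have ht1 : r₁ < t := by rw [ht]; linarith
  have ht2 : t < 2 * r₂ := by rw [ht]; linarith
  set v : Plane := EuclideanSpace.single (0 : Fin 2) t with hv
  have hnv : ‖v‖ = t := by
    rw [hv, EuclideanSpace.norm_single, Real.norm_eq_abs, abs_of_pos (by linarith)]
  have h1 : c₂ + v ∈ ball c₁ r₁ := hsub (by
    rw [mem_ball, dist_eq_norm, add_sub_cancel_left, hnv]; exact ht2)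
  have h2 : c₂ - v ∈ ball c₁ r₁ := hsub (by
    rw [mem_ball, dist_eq_norm, sub_sub_cancel_left, norm_neg, hnv]; exact ht2)
  have h3 : dist (c₂ + v) (c₂ - v) < 2 * r₁ := by
    calc dist (c₂ + v) (c₂ - v) ≤ dist (c₂ + v) c₁ + dist c₁ (c₂ - v) := dist_triangle _ _ _
      _ < r₁ + r₁ := add_lt_add (mem_ball.1 h1) (by rw [dist_comm]; exact mem_ball.1 h2)
      _ = 2 * r₁ := by ring
  have h4 : dist (c₂ + v) (c₂ - v) = 2 * t := by
    rw [dist_eq_norm, show c₂ + v - (c₂ - v) = (2:ℝ) • v by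
      rw [two_smul]; abel, norm_smul, Real.norm_eq_abs, hnv]
    norm_num
  rw [h4] at h3
  linarith

lemma arg_ge_one {r₁ r₂ : ℝ} (hr₂ : 0 < r₂) (hr₁ : 0 < r₁) (h1 : r₁ ≤ 1)
    (h2 : 2 * r₂ ≤ r₁) : 1 ≤ (1 - Real.log r₂) / (1 - Real.log r₁) := by
  have hl1 : Real.log r₁ ≤ 0 := Real.log_nonpos hr₁.le h1
  have hr21 : r₂ ≤ r₁ := by linarith
  have hl2 : Real.log r₂ ≤ Real.log r₁ := Real.log_le_log hr₂ hr21
  have hd : 0 < 1 - Real.log r₁ := by linarith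
  rw [le_div_iff₀ hd]
  linarith

end CB

namespace CB
open scoped ENNReal

def oscSet (f₀ : Plane → ℝ) : Set ℝ :=
  {m | ∃ c r, 0 < r ∧ m = ⨍ y in ball c r, |f₀ y - ballAvg f₀ c r|}

def pairSet (F₀ : ℝ → ℝ) (f₀ : Plane → ℝ) : Set ℝ :=
  {m | ∃ c₁ r₁ c₂ r₂, 0 < r₂ ∧ 0 < r₁ ∧ r₁ ≤ 1 ∧ ball c₂ (2 * r₂) ⊆ ball c₁ r₁ ∧
      m = |ballAvg f₀ c₂ r₂ - ballAvg f₀ c₁ r₁| / F₀ ((1 - Real.log r₂) / (1 - Real.log r₁))}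

lemma bmoNorm_eq (f₀ : Plane → ℝ) : bmoNorm f₀ = sSup (oscSet f₀) := rfl

lemma bmoFNorm_eq (F₀ : ℝ → ℝ) (f₀ : Plane → ℝ) :
    bmoFNorm F₀ f₀ = sSup (oscSet f₀) + sSup (pairSet F₀ f₀) := rfl

lemma ball_witness : ball (0 : Plane) (2 * (1/4)) ⊆ ball (0 : Plane) 1 := by
  intro x hx
  rw [mem_ball] at hx ⊢
  linarith

end CB

/-- For `F ∈ 𝓕`, `g ∈ L¹` and `f ∈ BMO_F`, the convolution `g ∗ f`
belongs to `BMO_F` with `‖g ∗ f‖_{BMO_F} ≤ ‖g‖_{L¹} ‖f‖_{BMO_F}`. -/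
theorem convolution_bmoF (F : ℝ → ℝ) (hF : ClassF F)
    (g f : Plane → ℝ) (hg : MeasureTheory.Integrable g volume) (hf : MemBMOF F f) :
    MemBMOF F (conv g f) ∧ bmoFNorm F (conv g f) ≤ (∫ y, |g y|) * bmoFNorm F f := by
  obtain ⟨hfL, K, hK, hP⟩ := hf
  have hK0 : 0 ≤ K := CB.K_nonneg hK
  have hg0 : 0 ≤ ∫ y, |g y| := integral_nonneg fun y => abs_nonneg _
  -- positivity of the weight F at admissible arguments
  have hFpos : ∀ {c₁ : Plane} {r₁ : ℝ} {c₂ : Plane} {r₂ : ℝ}, 0 < r₂ → 0 < r₁ → r₁ ≤ 1 →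
      ball c₂ (2 * r₂) ⊆ ball c₁ r₁ →
      1 ≤ F ((1 - Real.log r₂) / (1 - Real.log r₁)) := by
    intro c₁ r₁ c₂ r₂ h2 h1 h3 hsub
    exact hF.1 _ (CB.arg_ge_one h2 h1 h3 (CB.two_r_le h2 hsub))
  -- facts about the two suprema for f
  have hS1ne : (CB.oscSet f).Nonempty := ⟨_, 0, 1, one_pos, rfl⟩
  have hS1bdd : BddAbove (CB.oscSet f) := by
    refine ⟨K, ?_⟩
    rintro m ⟨c, r, hr, rfl⟩
    exact hK c r hr
  have hN0 : ∀ c r, 0 < r →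
      (⨍ y in ball c r, |f y - ballAvg f c r|) ≤ sSup (CB.oscSet f) :=
    fun c r hr => le_csSup hS1bdd ⟨c, r, hr, rfl⟩
  have hN0K : sSup (CB.oscSet f) ≤ K := by
    refine csSup_le hS1ne ?_
    rintro m ⟨c, r, hr, rfl⟩
    exact hK c r hr
  have hN00 : 0 ≤ sSup (CB.oscSet f) := le_trans (CB.osc_nonneg f 0 1) (hN0 0 1 one_pos)
  have hS2ne : (CB.pairSet F f).Nonempty :=
    ⟨_, 0, 1, 0, 1/4, by norm_num, one_pos, le_rfl, CB.ball_witness, rfl⟩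
  have hS2bdd : BddAbove (CB.pairSet F f) := by
    refine ⟨K, ?_⟩
    rintro m ⟨c₁, r₁, c₂, r₂, h2, h1, h3, hsub, rfl⟩
    rw [div_le_iff₀ (lt_of_lt_of_le one_pos (hFpos h2 h1 h3 hsub))]
    exact hP c₁ r₁ c₂ r₂ h2 h1 h3 hsub
  have hN1 : ∀ c₁ r₁ c₂ r₂, 0 < r₂ → 0 < r₁ → r₁ ≤ 1 →
      ball c₂ (2 * r₂) ⊆ ball c₁ r₁ →
      |ballAvg f c₂ r₂ - ballAvg f c₁ r₁| ≤
        sSup (CB.pairSet F f) * F ((1 - Real.log r₂) / (1 - Real.log r₁)) := by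
    intro c₁ r₁ c₂ r₂ h2 h1 h3 hsub
    have hmem : |ballAvg f c₂ r₂ - ballAvg f c₁ r₁| /
        F ((1 - Real.log r₂) / (1 - Real.log r₁)) ∈ CB.pairSet F f :=
      ⟨c₁, r₁, c₂, r₂, h2, h1, h3, hsub, rfl⟩
    have hle := le_csSup hS2bdd hmem
    rwa [div_le_iff₀ (lt_of_lt_of_le one_pos (hFpos h2 h1 h3 hsub))] at hle
  have hN1K : sSup (CB.pairSet F f) ≤ K := by
    refine csSup_le hS2ne ?_
    rintro m ⟨c₁, r₁, c₂, r₂, h2, h1, h3, hsub, rfl⟩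
    rw [div_le_iff₀ (lt_of_lt_of_le one_pos (hFpos h2 h1 h3 hsub))]
    exact hP c₁ r₁ c₂ r₂ h2 h1 h3 hsub
  have hN10 : 0 ≤ sSup (CB.pairSet F f) := by
    obtain ⟨m₀, hm₀⟩ := hS2ne
    refine le_trans ?_ (le_csSup hS2bdd hm₀)
    obtain ⟨c₁, r₁, c₂, r₂, h2, h1, h3, hsub, rfl⟩ := hm₀
    exact div_nonneg (abs_nonneg _) (le_trans zero_le_one (hFpos h2 h1 h3 hsub))
  by_cases hw : CB.Wf g f 0 < ⊤
  · -- main case: the convolution is given a.e. by an absolutely convergent integral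
    have hosc : ∀ c r, 0 < r →
        (⨍ x in ball c r, |conv g f x - ballAvg (conv g f) c r|) ≤
          (∫ y, |g y|) * sSup (CB.oscSet f) :=
      fun c r hr => CB.osc_conv hfL hK hg hw hK0 c hr (fun z => hN0 z r hr)
    have hpair : ∀ c₁ r₁ c₂ r₂, 0 < r₂ → 0 < r₁ → r₁ ≤ 1 →
        ball c₂ (2 * r₂) ⊆ ball c₁ r₁ →
        |ballAvg (conv g f) c₂ r₂ - ballAvg (conv g f) c₁ r₁| ≤
          (∫ y, |g y|) * (sSup (CB.pairSet F f) *
            F ((1 - Real.log r₂) / (1 - Real.log r₁))) := by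
      intro c₁ r₁ c₂ r₂ h2 h1 h3 hsub
      refine CB.pair_conv hfL hK hg hw hK0 h2 h1 ?_
      intro y
      refine hN1 (c₁ - y) r₁ (c₂ - y) r₂ h2 h1 h3 ?_
      intro x hx
      rw [mem_ball, dist_eq_norm] at hx ⊢
      have hx' : x + y ∈ ball c₂ (2 * r₂) := by
        rw [mem_ball, dist_eq_norm, show x + y - c₂ = x - (c₂ - y) by abel]
        exact hx
      have := hsub hx'
      rw [mem_ball, dist_eq_norm, show x + y - c₁ = x - (c₁ - y) by abel] at this
      exact this
    constructor
    · refine ⟨fun x => ⟨ball x 1, ball_mem_nhds x one_pos,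
        (CB.prod_int hfL hK hg hw x one_pos hK0).integral_prod_left⟩,
        (∫ y, |g y|) * K, ?_, ?_⟩
      · intro c r hr
        exact le_trans (hosc c r hr) (mul_le_mul_of_nonneg_left hN0K hg0)
      · intro c₁ r₁ c₂ r₂ h2 h1 h3 hsub
        refine le_trans (hpair c₁ r₁ c₂ r₂ h2 h1 h3 hsub) ?_
        have hFnn : 0 ≤ F ((1 - Real.log r₂) / (1 - Real.log r₁)) :=
          le_trans zero_le_one (hFpos h2 h1 h3 hsub)
        calc (∫ y, |g y|) * (sSup (CB.pairSet F f) * F ((1 - Real.log r₂) / (1 - Real.log r₁)))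
            = ((∫ y, |g y|) * sSup (CB.pairSet F f)) *
                F ((1 - Real.log r₂) / (1 - Real.log r₁)) := by ring
          _ ≤ ((∫ y, |g y|) * K) * F ((1 - Real.log r₂) / (1 - Real.log r₁)) :=
              mul_le_mul_of_nonneg_right (mul_le_mul_of_nonneg_left hN1K hg0) hFnn
    · rw [CB.bmoFNorm_eq, CB.bmoFNorm_eq]
      have c1 : sSup (CB.oscSet (conv g f)) ≤ (∫ y, |g y|) * sSup (CB.oscSet f) := by
        refine csSup_le ⟨_, 0, 1, one_pos, rfl⟩ ?_
        rintro m ⟨c, r, hr, rfl⟩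
        exact hosc c r hr
      have c2 : sSup (CB.pairSet F (conv g f)) ≤ (∫ y, |g y|) * sSup (CB.pairSet F f) := by
        refine csSup_le ⟨_, 0, 1, 0, 1/4, by norm_num, one_pos, le_rfl, CB.ball_witness, rfl⟩ ?_
        rintro m ⟨c₁, r₁, c₂, r₂, h2, h1, h3, hsub, rfl⟩
        rw [div_le_iff₀ (lt_of_lt_of_le one_pos (hFpos h2 h1 h3 hsub))]
        calc |ballAvg (conv g f) c₂ r₂ - ballAvg (conv g f) c₁ r₁|
            ≤ (∫ y, |g y|) * (sSup (CB.pairSet F f) *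
                F ((1 - Real.log r₂) / (1 - Real.log r₁))) := hpair c₁ r₁ c₂ r₂ h2 h1 h3 hsub
          _ = (∫ y, |g y|) * sSup (CB.pairSet F f) *
                F ((1 - Real.log r₂) / (1 - Real.log r₁)) := by ring
      calc sSup (CB.oscSet (conv g f)) + sSup (CB.pairSet F (conv g f))
          ≤ (∫ y, |g y|) * sSup (CB.oscSet f) + (∫ y, |g y|) * sSup (CB.pairSet F f) :=
            add_le_add c1 c2
        _ = (∫ y, |g y|) * (sSup (CB.oscSet f) + sSup (CB.pairSet F f)) := by ring
  · -- degenerate case: the convolution integral diverges a.e., so `conv g f = 0` a.e.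
    have hzero := CB.conv_zero hfL hK hg hw
    constructor
    · refine ⟨CB.locInt_zero hzero, 0, ?_, ?_⟩
      · intro c r hr
        exact le_of_eq (CB.osc_zero hzero c r)
      · intro c₁ r₁ c₂ r₂ h2 h1 h3 hsub
        rw [CB.avg_zero hzero, CB.avg_zero hzero, sub_zero, abs_zero, zero_mul]
    · have hosc0 : sSup (CB.oscSet (conv g f)) = 0 := by
        have hset : CB.oscSet (conv g f) = {0} := by
          ext m
          constructor
          · rintro ⟨c, r, hr, rfl⟩
            exact CB.osc_zero hzero c r
          · rintro rfl
            exact ⟨0, 1, one_pos, (CB.osc_zero hzero 0 1).symm⟩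
        rw [hset, csSup_singleton]
      have hpair0 : sSup (CB.pairSet F (conv g f)) = 0 := by
        have hset : CB.pairSet F (conv g f) = {0} := by
          ext m
          constructor
          · rintro ⟨c₁, r₁, c₂, r₂, h2, h1, h3, hsub, rfl⟩
            rw [CB.avg_zero hzero, CB.avg_zero hzero, sub_zero, abs_zero, zero_div]
            rfl
          · rintro rfl
            refine ⟨0, 1, 0, 1/4, by norm_num, one_pos, le_rfl, CB.ball_witness, ?_⟩
            rw [CB.avg_zero hzero, CB.avg_zero hzero, sub_zero, abs_zero, zero_div]
        rw [hset, csSup_singleton]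
      rw [CB.bmoFNorm_eq, CB.bmoFNorm_eq, hosc0, hpair0, add_zero]
      exact mul_nonneg hg0 (add_nonneg hN00 hN10)
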